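/- Let a = (a_1,…,a_p) be a primitive p-tuple, S ⊆ {0,1}^n an independence system, w ∈ {a_1,…,a_p}^n, and define λ ∈ ℤ_+^p by λ_i := max(a) for all i. For each μ ≤ λ with S^λ_μ ≠ ∅, let x_μ be any maximizer of w·x over S^λ_μ and let T_μ := {x ∈ {0,1}^n : x ≤ x_μ}. Then at most r(a) values of the image w·S lie outside ⋃_μ w·T_μ, i.e., |w·S \ ⋃_{μ ≤ λ, S^λ_μ ≠ ∅} w·T_μ| ≤ r(a). Consequently, any x* minimizing f(w·x) over ⋃_μ T_μ ∩ S is an r(a)-best solution to min{f(w·x) : x ∈ S} for any f : ℤ → ℝ. -/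
import Mathlib


/-- The monoid generated by a tuple `a` of nonnegative integers. -/
def tupleMonoid {ι : Type} [Fintype ι] (a : ι → ℕ) : Set ℕ :=
  {v | ∃ μ : ι → ℕ, v = ∑ i, μ i * a i}

/-- The gap set `G(a) = ℤ₊ \ M(a)`. -/
def gapSet {ι : Type} [Fintype ι] (a : ι → ℕ) : Set ℕ :=
  {v | v ∉ tupleMonoid a}

/-- The Frobenius number `F(a) = max G(a)`, with `F(a) := 0` when `G(a) = ∅`. -/
noncomputable def frob {ι : Type} [Fintype ι] (a : ι → ℕ) : ℕ :=
  sSup (gapSet a)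

lemma finset_gcd_bezout {ι : Type*} (s : Finset ι) (b : ι → ℕ) :
    ∃ c : ι → ℤ, ((s.gcd b : ℕ) : ℤ) = ∑ i ∈ s, c i * b i := by
  classical
  induction s using Finset.induction with
  | empty => exact ⟨0, by simp⟩
  | @insert j s hj ih =>
    obtain ⟨c, hc⟩ := ih
    refine ⟨fun i => if i = j then Nat.gcdA (b j) (s.gcd b)
      else Nat.gcdB (b j) (s.gcd b) * c i, ?_⟩
    rw [Finset.gcd_insert, Finset.sum_insert hj]
    have hg := Nat.gcd_eq_gcd_ab (b j) (s.gcd b)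
    simp only [if_pos rfl]
    have h2 : (gcd (b j) (s.gcd b) : ℕ) = Nat.gcd (b j) (s.gcd b) := rfl
    rw [h2, hg]
    have : ∑ i ∈ s, (if i = j then Nat.gcdA (b j) (s.gcd b)
        else Nat.gcdB (b j) (s.gcd b) * c i) * (b i : ℤ)
        = Nat.gcdB (b j) (s.gcd b) * ∑ i ∈ s, c i * (b i : ℤ) := by
      rw [Finset.mul_sum]
      refine Finset.sum_congr rfl fun i hi => ?_
      rw [if_neg (by rintro rfl; exact hj hi)]; ring
    rw [this, ← hc]; simp only [if_true]; ring

lemma gapSet_subset_Iic {ι : Type} [Fintype ι] (b : ι → ℕ) (i0 : ι) (h0 : 0 < b i0)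
    (hg : Finset.univ.gcd b = 1) :
    gapSet b ⊆ Set.Iic (∑ i, (b i0 - 1) * b i) := by
  classical
  intro v hv
  by_contra hlt
  simp only [Set.mem_Iic, not_le] at hlt
  apply hv
  obtain ⟨c, hc⟩ := finset_gcd_bezout Finset.univ b
  rw [hg] at hc
  set m : ℤ := (b i0 : ℤ) with hm
  have hm0 : 0 < m := by rw [hm]; exact_mod_cast h0
  set d : ι → ℤ := fun i => (v * c i) % m with hd
  set q : ι → ℤ := fun i => (v * c i) / m with hq
  have hdq : ∀ i, d i = v * c i - m * q i := fun i => by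
    simp only [hd, hq]; rw [Int.emod_def]
  have hd0 : ∀ i, 0 ≤ d i := fun i => Int.emod_nonneg _ (by omega)
  have hdlt : ∀ i, d i ≤ m - 1 := fun i => by
    have := Int.emod_lt_of_pos (v * c i) hm0; simp only [hd]; omega
  set s : ℤ := ∑ i, d i * b i with hs
  set Q : ℤ := ∑ i, q i * b i with hQ
  have hs0 : 0 ≤ s := Finset.sum_nonneg fun i _ => mul_nonneg (hd0 i) (by positivity)
  have hsv : s = v - m * Q := by
    have h1 : s = (∑ i, (v : ℤ) * (c i * b i)) - ∑ i, m * (q i * b i) := by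
      rw [hs, ← Finset.sum_sub_distrib]
      exact Finset.sum_congr rfl fun i _ => by rw [hdq i]; ring
    have h2 : ∑ i, (v : ℤ) * (c i * b i) = v := by
      rw [← Finset.mul_sum, ← hc]; push_cast; ring
    rw [h1, h2, hQ, Finset.mul_sum]
  have hcast : ((∑ i, (b i0 - 1) * b i : ℕ) : ℤ) = ∑ i, (m - 1) * (b i : ℤ) := by
    push_cast
    refine Finset.sum_congr rfl fun i _ => ?_
    have : ((b i0 - 1 : ℕ) : ℤ) = m - 1 := by simp only [hm]; omega
    rw [this]
  have hsB : s ≤ ∑ i, (m - 1) * (b i : ℤ) := Finset.sum_le_sum fun i _ =>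
    mul_le_mul_of_nonneg_right (hdlt i) (by positivity)
  have hBv : (∑ i, (m - 1) * (b i : ℤ)) < (v : ℤ) := by
    rw [← hcast]; exact_mod_cast hlt
  have hQ0 : 0 ≤ Q := by nlinarith
  refine ⟨fun i => (d i).toNat + (if i = i0 then Q.toNat else 0), ?_⟩
  have key : ((∑ i, ((d i).toNat + (if i = i0 then Q.toNat else 0)) * b i : ℕ) : ℤ) = (v : ℤ) := by
    push_cast
    have h1 : ∀ i ∈ Finset.univ (α := ι),
        (((d i).toNat : ℤ) + (if i = i0 then (Q.toNat : ℤ) else 0)) * (b i : ℤ)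
        = d i * b i + (if i = i0 then Q * b i else 0) := by
      intro i _
      rw [Int.toNat_of_nonneg (hd0 i)]
      split_ifs with h
      · rw [Int.toNat_of_nonneg hQ0]; ring
      · ring
    rw [Finset.sum_congr rfl h1, Finset.sum_add_distrib, Finset.sum_ite_eq' Finset.univ i0]
    simp only [Finset.mem_univ, if_true, ← hs]
    rw [hsv, hm]; ring
  exact_mod_cast key.symm

lemma adjust_aux {ι : Type} [Fintype ι] (b cap : ι → ℕ) (M : ℕ)
    (hbpos : ∀ i, 0 < b i) (hbM : ∀ i, b i ≤ M) (hcap : ∀ i, M ≤ cap i) :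
    ∀ N : ℕ, ∀ ν : ι → ℕ, (∑ i, (ν i - cap i)) ≤ N →
    (∑ i, ν i * b i ≤ ∑ i, (cap i - M) * b i) →
    ∃ ν' : ι → ℕ, (∀ i, ν' i ≤ cap i) ∧ ∑ i, ν' i * b i = ∑ i, ν i * b i := by
  classical
  intro N
  induction N with
  | zero =>
    intro ν hpot _
    refine ⟨ν, fun i => ?_, rfl⟩
    have := Finset.sum_eq_zero_iff.mp (Nat.le_zero.mp hpot) i (Finset.mem_univ i)
    omega
  | succ N ih =>
    intro ν hpot hd
    by_cases hok : ∀ i, ν i ≤ cap i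
    · exact ⟨ν, hok, rfl⟩
    push_neg at hok
    obtain ⟨i, hi⟩ := hok
    have hj : ∃ j, ν j * b j < (cap j - M) * b j := by
      by_contra h
      push_neg at h
      have hlt : ∑ k, (cap k - M) * b k < ∑ k, ν k * b k := by
        refine Finset.sum_lt_sum (fun k _ => h k) ⟨i, Finset.mem_univ i, ?_⟩
        exact (Nat.mul_lt_mul_right (hbpos i)).mpr (by omega)
      omega
    obtain ⟨j, hjlt⟩ := hj
    have hjcap : ν j + M ≤ cap j := by
      have : ν j < cap j - M := by
        by_contra h
        push_neg at h
        exact absurd (Nat.mul_le_mul_right (b j) h) (by omega)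
      omega
    have hij : j ≠ i := by
      intro h; subst h
      have := hcap j; omega
    have hij' : i ≠ j := Ne.symm hij
    have hbji : b j ≤ ν i := le_trans (le_trans (hbM j) (hcap i)) (le_of_lt hi)
    set ν2 : ι → ℕ := fun k => if k = i then ν i - b j else if k = j then ν j + b i else ν k
      with hν2
    have hsum : ∑ k, ν2 k * b k = ∑ k, ν k * b k := by
      have hrw : (fun k => ν2 k * b k) = Function.update
          (Function.update (fun k => ν k * b k) i ((ν i - b j) * b i)) j ((ν j + b i) * b j) := by
        funext k
        simp only [hν2, Function.update]
        by_cases h1 : k = j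
        · subst h1; simp [hij]
        · by_cases h2 : k = i
          · subst h2; simp [h1, hij']
          · simp [h1, h2]
      have huniv : (Finset.univ \ {j}) \ {i} = Finset.univ \ ({i, j} : Finset ι) := by
        ext k; simp [Finset.mem_sdiff]; tauto
      have ht : (ν i - b j) * b i + b j * b i = ν i * b i := by
        rw [← Nat.add_mul]; congr 1; omega
      calc ∑ k, ν2 k * b k
          = ∑ k, Function.update (Function.update (fun k => ν k * b k) i
              ((ν i - b j) * b i)) j ((ν j + b i) * b j) k := by rw [hrw]
        _ = (ν j + b i) * b j + ∑ k ∈ Finset.univ \ {j},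
              Function.update (fun k => ν k * b k) i ((ν i - b j) * b i) k :=
            Finset.sum_update_of_mem (Finset.mem_univ j) _ _
        _ = (ν j + b i) * b j + ((ν i - b j) * b i
              + ∑ k ∈ (Finset.univ \ {j}) \ {i}, ν k * b k) := by
            rw [Finset.sum_update_of_mem]
            simp [Finset.mem_sdiff, hij.symm]
        _ = (ν j * b j + ((ν i - b j) * b i + b j * b i))
              + ∑ k ∈ (Finset.univ \ {j}) \ {i}, ν k * b k := by ring
        _ = (ν j * b j + ν i * b i) + ∑ k ∈ (Finset.univ \ {j}) \ {i}, ν k * b k := by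
            rw [ht]
        _ = ∑ k, ν k * b k := by
            rw [huniv, ← Finset.sum_sdiff (Finset.subset_univ ({i, j} : Finset ι)),
              Finset.sum_pair hij']
            ring
    have hpot2 : ∑ k, (ν2 k - cap k) ≤ N := by
      have hlt : ∑ k, (ν2 k - cap k) < ∑ k, (ν k - cap k) := by
        refine Finset.sum_lt_sum (fun k _ => ?_) ⟨i, Finset.mem_univ i, ?_⟩
        · simp only [hν2]
          split_ifs with h1 h2
          · subst h1; omega
          · subst h2; have := hbM i; omega
          · omega
        · simp only [hν2]
          simp only [if_true]
          have := hbpos j; omega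
      omega
    obtain ⟨ν', h1, h2⟩ := ih ν2 hpot2 (by rw [hsum]; exact hd)
    exact ⟨ν', h1, by rw [h2, hsum]⟩

/-- `r(a) := Σ_{μ ≤ λ} F(a^λ_μ)`, where `λ_i := max(a)` for all `i`,
`I^λ_μ := {i : μ_i = λ_i}`, and `a^λ_μ := (a_i / gcd(a_i : i ∈ I^λ_μ) : i ∈ I^λ_μ)`.
The tuples `μ ≤ λ` are encoded as functions `Fin p → Fin (max(a)+1)`. -/
noncomputable def rval {p : ℕ} (a : Fin p → ℕ) : ℕ :=
  ∑ μ : Fin p → Fin (Finset.univ.sup a + 1),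
    frob (fun i : {i : Fin p // (μ i : ℕ) = Finset.univ.sup a} =>
      a i.1 / (Finset.univ.filter
        (fun i : Fin p => (μ i : ℕ) = Finset.univ.sup a)).gcd a)

/-- 0/1 points `x ∈ {0,1}^n` are encoded as subsets of `{1,…,n}` (their supports);
`x ≤ y` is `x ⊆ y` and `w·x = ∑_{j ∈ x} w_j`.
Here `λ_i(x) = |supp(x) ∩ N_i|` where `N_i = {j : w_j = a_i}`. -/
def lamCoord {n p : ℕ} (a : Fin p → ℕ) (w : Fin n → ℕ)
    (x : Finset (Fin n)) (i : Fin p) : ℕ :=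
  (x.filter fun j => w j = a i).card

/-- The block `S^λ_μ` of `S` induced by `μ ≤ λ`. -/
def block {n p : ℕ} (a : Fin p → ℕ) (w : Fin n → ℕ) (S : Set (Finset (Fin n)))
    (lam μ : Fin p → ℕ) : Set (Finset (Fin n)) :=
  {x ∈ S | ∀ i, (μ i < lam i → lamCoord a w x i = μ i) ∧
                (μ i = lam i → μ i ≤ lamCoord a w x i)}

lemma sum_w_eq {n p : ℕ} (a : Fin p → ℕ) (w : Fin n → ℕ) (ha_inj : Function.Injective a)
    (hw : ∀ j, ∃ i, w j = a i) (x : Finset (Fin n)) :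
    ∑ j ∈ x, w j = ∑ i, lamCoord a w x i * a i := by
  classical
  choose idx hidx using hw
  have hfil : ∀ i, x.filter (fun j => w j = a i) = x.filter (fun j => idx j = i) := by
    intro i
    refine Finset.filter_congr fun j _ => ?_
    constructor
    · intro h; exact ha_inj ((hidx j).symm.trans h)
    · intro h; rw [hidx j, h]
  calc ∑ j ∈ x, w j = ∑ i, ∑ j ∈ x.filter (fun j => idx j = i), w j :=
        (Finset.sum_fiberwise_of_maps_to (fun j _ => Finset.mem_univ (idx j)) w).symm
    _ = ∑ i, lamCoord a w x i * a i := by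
        refine Finset.sum_congr rfl fun i _ => ?_
        rw [lamCoord, hfil i]
        rw [Finset.sum_congr rfl (fun j hj => show w j = a i by
          have := (Finset.mem_filter.mp hj).2; rw [hidx j, this])]
        rw [Finset.sum_const, smul_eq_mul]

lemma exists_subset_sum {n p : ℕ} (a : Fin p → ℕ) (w : Fin n → ℕ)
    (ha_inj : Function.Injective a) (x : Finset (Fin n)) (I : Finset (Fin p)) (ν : Fin p → ℕ)
    (hν : ∀ i ∈ I, ν i ≤ lamCoord a w x i) :
    ∃ y ⊆ x, ∑ j ∈ y, w j + ∑ i ∈ I, ν i * a i = ∑ j ∈ x, w j := by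
  classical
  have hch : ∀ i ∈ I, ∃ t ⊆ x.filter (fun j => w j = a i), t.card = ν i := fun i hi =>
    Finset.exists_subset_card_eq (hν i hi)
  choose! R hR1 hR2 using hch
  set Rt := I.biUnion R with hRt
  have hRsub : Rt ⊆ x := by
    intro j hj
    rw [hRt, Finset.mem_biUnion] at hj
    obtain ⟨i, hi, hji⟩ := hj
    exact (Finset.mem_filter.mp (hR1 i hi hji)).1
  refine ⟨x \ Rt, Finset.sdiff_subset, ?_⟩
  have hdisj : Set.PairwiseDisjoint (↑I : Set (Fin p)) R := by
    intro i hi i' hi' hne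
    refine Finset.disjoint_left.mpr fun j hj hj' => ?_
    have h1 := (Finset.mem_filter.mp (hR1 i hi hj)).2
    have h2 := (Finset.mem_filter.mp (hR1 i' hi' hj')).2
    exact hne (ha_inj (h1.symm.trans h2))
  have hsum : ∑ j ∈ Rt, w j = ∑ i ∈ I, ν i * a i := by
    rw [hRt, Finset.sum_biUnion hdisj]
    refine Finset.sum_congr rfl fun i hi => ?_
    rw [Finset.sum_congr rfl (fun j hj => (Finset.mem_filter.mp (hR1 i hi hj)).2),
      Finset.sum_const, hR2 i hi, smul_eq_mul]
  rw [← Finset.sum_sdiff hRsub, hsum]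

lemma ncard_iUnion_le' {α ι : Type*} [Fintype ι] (f : ι → Set α) :
    (⋃ i, f i).ncard ≤ ∑ i, (f i).ncard := by
  classical
  have key : ∀ s : Finset ι, (⋃ i ∈ s, f i).ncard ≤ ∑ i ∈ s, (f i).ncard := by
    intro s
    induction s using Finset.induction with
    | empty => simp
    | @insert j s hj ih =>
      rw [Finset.sum_insert hj]
      refine le_trans (le_of_eq (congrArg Set.ncard (Finset.set_biUnion_insert j s f))) ?_
      exact le_trans (Set.ncard_union_le _ _) (by omega)
  have := key Finset.univ
  simpa using this

lemma bad_ncard_le {n p : ℕ} (a : Fin p → ℕ)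
    (ha_pos : ∀ i, 0 < a i) (ha_inj : Function.Injective a)
    (S : Set (Finset (Fin n)))
    (w : Fin n → ℕ) (hw : ∀ j, ∃ i, w j = a i)
    (xm : (Fin p → ℕ) → Finset (Fin n))
    (hxm : ∀ μ ≤ (fun _ => Finset.univ.sup a : Fin p → ℕ),
      (block a w S (fun _ => Finset.univ.sup a) μ).Nonempty →
      xm μ ∈ block a w S (fun _ => Finset.univ.sup a) μ ∧
        ∀ x ∈ block a w S (fun _ => Finset.univ.sup a) μ,
          ∑ j ∈ x, w j ≤ ∑ j ∈ xm μ, w j)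
    (U : Set (Finset (Fin n)))
    (hU : U = ⋃ μ ∈ {μ : Fin p → ℕ | μ ≤ (fun _ => Finset.univ.sup a) ∧
        (block a w S (fun _ => Finset.univ.sup a) μ).Nonempty},
      {x : Finset (Fin n) | x ⊆ xm μ})
    (μh : Fin p → Fin (Finset.univ.sup a + 1)) :
    ((((fun x : Finset (Fin n) => ∑ j ∈ x, w j) '' S) \
        ((fun x : Finset (Fin n) => ∑ j ∈ x, w j) '' U)) ∩
      {v | ∃ x ∈ block a w S (fun _ => Finset.univ.sup a) (fun i => (μh i : ℕ)),
        v = ∑ j ∈ x, w j}).ncard ≤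
      frob (fun i : {i : Fin p // (μh i : ℕ) = Finset.univ.sup a} =>
        a i.1 / (Finset.univ.filter
          (fun i : Fin p => (μh i : ℕ) = Finset.univ.sup a)).gcd a) := by
  classical
  set μ : Fin p → ℕ := fun i => (μh i : ℕ) with hμdef
  have hμle : μ ≤ (fun _ => Finset.univ.sup a) := fun i => by
    have := (μh i).isLt; simp only [hμdef]; omega
  by_cases hne : (block a w S (fun _ => Finset.univ.sup a) μ).Nonempty
  swap
  · -- block empty, the bad set is empty
    have : ((((fun x : Finset (Fin n) => ∑ j ∈ x, w j) '' S) \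
        ((fun x : Finset (Fin n) => ∑ j ∈ x, w j) '' U)) ∩
        {v | ∃ x ∈ block a w S (fun _ => Finset.univ.sup a) μ, v = ∑ j ∈ x, w j}) = ∅ := by
      ext v
      simp only [Set.mem_inter_iff, Set.mem_setOf_eq, Set.mem_empty_iff_false, iff_false,
        not_and]
      rintro _ ⟨x, hx, _⟩
      exact hne ⟨x, hx⟩
    rw [this]
    simp
  obtain ⟨hxmem, hxmax⟩ := hxm μ hμle hne
  have hxmuU : xm μ ∈ U := by
    rw [hU]
    exact Set.mem_biUnion ⟨hμle, hne⟩ (by exact Finset.Subset.refl _)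
  have hWU : (∑ j ∈ xm μ, w j) ∈ (fun x : Finset (Fin n) => ∑ j ∈ x, w j) '' U :=
    ⟨xm μ, hxmuU, rfl⟩
  set I : Finset (Fin p) := Finset.univ.filter (fun i : Fin p => (μh i : ℕ) = Finset.univ.sup a) with hI
  by_cases hIne : I.Nonempty
  swap
  · -- I empty : every x in the block has value ∑ j ∈ xm μ, w j
    have hval : ∀ x ∈ block a w S (fun _ => Finset.univ.sup a) μ, ∑ j ∈ x, w j = ∑ j ∈ xm μ, w j := by
      intro x hx
      have hcoord : ∀ z ∈ block a w S (fun _ => Finset.univ.sup a) μ, ∀ i, lamCoord a w z i = μ i := by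
        intro z hz i
        have hiM : μ i < Finset.univ.sup a := by
          rcases lt_or_eq_of_le (hμle i) with h | h
          · exact h
          · exact absurd (Finset.mem_filter.mpr ⟨Finset.mem_univ i, h⟩)
              (fun hmem => hIne ⟨i, hmem⟩)
        exact (hz.2 i).1 hiM
      rw [sum_w_eq a w ha_inj hw x, sum_w_eq a w ha_inj hw (xm μ)]
      refine Finset.sum_congr rfl fun i _ => ?_
      rw [hcoord x hx i, hcoord (xm μ) hxmem i]
    have : ((((fun x : Finset (Fin n) => ∑ j ∈ x, w j) '' S) \
        ((fun x : Finset (Fin n) => ∑ j ∈ x, w j) '' U)) ∩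
        {v | ∃ x ∈ block a w S (fun _ => Finset.univ.sup a) μ, v = ∑ j ∈ x, w j}) = ∅ := by
      ext v
      simp only [Set.mem_inter_iff, Set.mem_setOf_eq, Set.mem_empty_iff_false, iff_false,
        not_and, Set.mem_diff]
      rintro ⟨_, hvnU⟩ ⟨x, hx, rfl⟩
      exact hvnU ((hval x hx) ▸ hWU)
    rw [this]
    simp
  -- main case : I nonempty
  obtain ⟨i0v, hi0v⟩ := hIne
  have hi0 : (μh i0v : ℕ) = Finset.univ.sup a := (Finset.mem_filter.mp hi0v).2
  set g : ℕ := I.gcd a with hg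
  have hgd : ∀ i ∈ I, g ∣ a i := fun i hi => Finset.gcd_dvd hi
  have hgpos : 0 < g := by
    rcases Nat.eq_zero_or_pos g with h | h
    · exact absurd (Finset.gcd_eq_zero_iff.mp h i0v hi0v) (ha_pos i0v).ne'
    · exact h
  set b : {i : Fin p // (μh i : ℕ) = Finset.univ.sup a} → ℕ :=
    fun i => a i.1 / g with hb
  have hpredI : ∀ i : Fin p, i ∈ I ↔ (μh i : ℕ) = Finset.univ.sup a := fun i =>
    ⟨fun h => (Finset.mem_filter.mp h).2,
     fun h => Finset.mem_filter.mpr ⟨Finset.mem_univ _, h⟩⟩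
  have hmemI : ∀ i : {i : Fin p // (μh i : ℕ) = Finset.univ.sup a}, i.1 ∈ I :=
    fun i => (hpredI i.1).mpr i.2
  have hbg : ∀ i : {i : Fin p // (μh i : ℕ) = Finset.univ.sup a}, b i * g = a i.1 :=
    fun i => Nat.div_mul_cancel (hgd _ (hmemI i))
  have hbpos : ∀ i, 0 < b i := fun i =>
    Nat.div_pos (Nat.le_of_dvd (ha_pos _) (hgd _ (hmemI i))) hgpos
  have hbM : ∀ i, b i ≤ Finset.univ.sup a := fun i =>
    le_trans (Nat.div_le_self _ _) (Finset.le_sup (Finset.mem_univ i.1))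
  have hgcd1 : Finset.univ.gcd b = 1 := by
    have hdvd : ∀ i ∈ I, g * Finset.univ.gcd b ∣ a i := by
      intro i hi
      have h1 : Finset.univ.gcd b ∣ b ⟨i, (Finset.mem_filter.mp hi).2⟩ :=
        Finset.gcd_dvd (Finset.mem_univ _)
      have h2 := hbg ⟨i, (Finset.mem_filter.mp hi).2⟩
      calc g * Finset.univ.gcd b ∣ g * b ⟨i, (Finset.mem_filter.mp hi).2⟩ :=
            mul_dvd_mul_left g h1
        _ = a i := by rw [mul_comm]; exact h2
    have hgg : g * Finset.univ.gcd b ∣ g * 1 := by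
      rw [mul_one, hg]; exact Finset.dvd_gcd hdvd
    exact Nat.dvd_one.mp ((mul_dvd_mul_iff_left hgpos.ne').mp hgg)
  set W := ∑ j ∈ xm μ, w j with hW
  set F := frob b with hF
  have hsubset : ((((fun x : Finset (Fin n) => ∑ j ∈ x, w j) '' S) \
        ((fun x : Finset (Fin n) => ∑ j ∈ x, w j) '' U)) ∩
      {v | ∃ x ∈ block a w S (fun _ => Finset.univ.sup a) μ, v = ∑ j ∈ x, w j})
      ⊆ (fun t => W - g * t) '' Set.Icc 1 F := by
    rintro v ⟨⟨hvS, hvnU⟩, x, hxblk, rfl⟩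
    have hvle : ∑ j ∈ x, w j ≤ W := hxmax x hxblk
    set J : Finset (Fin p) :=
      Finset.univ.filter (fun i : Fin p => ¬((μh i : ℕ) = Finset.univ.sup a)) with hJ
    have hsplit : ∀ z : Finset (Fin n), ∑ j ∈ z, w j
        = ∑ i ∈ I, lamCoord a w z i * a i + ∑ i ∈ J, lamCoord a w z i * a i := by
      intro z
      rw [sum_w_eq a w ha_inj hw z]
      exact (Finset.sum_filter_add_sum_filter_not Finset.univ _ _).symm
    have hCeq : ∑ i ∈ J, lamCoord a w x i * a i
        = ∑ i ∈ J, lamCoord a w (xm μ) i * a i := by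
      refine Finset.sum_congr rfl fun i hi => ?_
      have hnot : ¬((μh i : ℕ) = Finset.univ.sup a) := (Finset.mem_filter.mp hi).2
      have hlt : μ i < Finset.univ.sup a := by
        have := (μh i).isLt
        simp only [hμdef]
        omega
      rw [(hxblk.2 i).1 hlt, (hxmem.2 i).1 hlt]
    set A := ∑ i ∈ I, lamCoord a w x i * a i with hA
    set A' := ∑ i ∈ I, lamCoord a w (xm μ) i * a i with hA'
    set C := ∑ i ∈ J, lamCoord a w x i * a i with hC
    have hvX : ∑ j ∈ x, w j = A + C := hsplit x
    have hWX : W = A' + C := by rw [hW, hsplit (xm μ), ← hCeq]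
    have hAA' : A ≤ A' := by omega
    have hgA : g ∣ A := Finset.dvd_sum fun i hi => (hgd i hi).mul_left _
    have hgA' : g ∣ A' := Finset.dvd_sum fun i hi => (hgd i hi).mul_left _
    set t := (A' - A) / g with ht
    have hgt : g * t = A' - A := Nat.mul_div_cancel' (Nat.dvd_sub hgA' hgA)
    have ht1 : 1 ≤ t := by
      rcases Nat.eq_zero_or_pos t with h | h
      · exfalso
        apply hvnU
        have hD : A' - A = 0 := by rw [← hgt, h, mul_zero]
        have hvw : ∑ j ∈ x, w j = W := by omega
        rw [hvw]
        exact hWU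
      · exact h
    have hcap : ∀ i : {i : Fin p // (μh i : ℕ) = Finset.univ.sup a},
        Finset.univ.sup a ≤ lamCoord a w (xm μ) i.1 := fun i => by
      have h := (hxmem.2 i.1).2 i.2
      calc Finset.univ.sup a = μ i.1 := i.2.symm
        _ ≤ lamCoord a w (xm μ) i.1 := h
    have hlamx : ∀ i ∈ I, Finset.univ.sup a ≤ lamCoord a w x i := fun i hi => by
      have h2 := (hpredI i).mp hi
      have h := (hxblk.2 i).2 h2
      calc Finset.univ.sup a = μ i := h2.symm
        _ ≤ lamCoord a w x i := h
    have htF : t ≤ F := by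
      by_contra htF
      push_neg at htF
      have htmem : t ∈ tupleMonoid b := by
        by_contra hmem
        have hb1 := gapSet_subset_Iic b ⟨i0v, hi0⟩ (hbpos _) hgcd1
        have hbdd : BddAbove (gapSet b) := ⟨_, fun z hz => hb1 hz⟩
        have hle : t ≤ F := le_csSup hbdd (hmem : t ∈ gapSet b)
        omega
      obtain ⟨ν, hν⟩ := htmem
      have hgRHS : g * ∑ i : {i : Fin p // (μh i : ℕ) = Finset.univ.sup a},
          (lamCoord a w (xm μ) i.1 - Finset.univ.sup a) * b i
          = ∑ i ∈ I, (lamCoord a w (xm μ) i - Finset.univ.sup a) * a i := by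
        rw [Finset.sum_subtype I hpredI
          (fun i => (lamCoord a w (xm μ) i - Finset.univ.sup a) * a i), Finset.mul_sum]
        refine Finset.sum_congr rfl fun i _ => ?_
        rw [← hbg i]
        ring
      have hSM : ∑ i ∈ I, Finset.univ.sup a * a i ≤ A :=
        Finset.sum_le_sum fun i hi => Nat.mul_le_mul_right _ (hlamx i hi)
      have hSB : ∑ i ∈ I, (lamCoord a w (xm μ) i - Finset.univ.sup a) * a i
          + ∑ i ∈ I, Finset.univ.sup a * a i = A' := by
        rw [← Finset.sum_add_distrib]
        refine Finset.sum_congr rfl fun i hi => ?_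
        rw [← Nat.add_mul]
        congr 1
        have h3 : Finset.univ.sup a ≤ lamCoord a w (xm μ) i := hcap ⟨i, (hpredI i).mp hi⟩
        omega
      have hsum_sub : ∑ i, ν i * b i
          ≤ ∑ i : {i : Fin p // (μh i : ℕ) = Finset.univ.sup a},
            (lamCoord a w (xm μ) i.1 - Finset.univ.sup a) * b i := by
        apply Nat.le_of_mul_le_mul_left _ hgpos
        rw [← hν, hgt, hgRHS]
        omega
      obtain ⟨ν', hν'cap, hν'sum⟩ := adjust_aux b (fun i => lamCoord a w (xm μ) i.1)
        (Finset.univ.sup a) hbpos hbM hcap _ ν le_rfl hsum_sub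
      set νN : Fin p → ℕ :=
        fun i => if h : (μh i : ℕ) = Finset.univ.sup a then ν' ⟨i, h⟩ else 0 with hνN
      have hνNle : ∀ i ∈ I, νN i ≤ lamCoord a w (xm μ) i := fun i hi => by
        have h2 := (hpredI i).mp hi
        simp only [hνN, dif_pos h2]
        exact hν'cap ⟨i, h2⟩
      obtain ⟨y, hysub, hyval⟩ := exists_subset_sum a w ha_inj (xm μ) I νN hνNle
      have hyI : ∑ i ∈ I, νN i * a i = A' - A := by
        rw [Finset.sum_subtype I hpredI (fun i => νN i * a i)]
        have hterm : ∀ i : {i : Fin p // (μh i : ℕ) = Finset.univ.sup a},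
            νN i.1 * a i.1 = g * (ν' i * b i) := fun i => by
          simp only [hνN, dif_pos i.2, Subtype.coe_eta]
          rw [← hbg i]
          ring
        rw [Finset.sum_congr rfl (fun i _ => hterm i), ← Finset.mul_sum, hν'sum, ← hν, hgt]
      apply absurd hvnU
      simp only [not_not]
      have hyW : ∑ j ∈ y, w j = ∑ j ∈ x, w j := by
        rw [hyI] at hyval
        omega
      have hyU : y ∈ U := by
        rw [hU]
        exact Set.mem_biUnion ⟨hμle, hne⟩ hysub
      exact ⟨y, hyU, by simpa using hyW⟩
    refine ⟨t, Set.mem_Icc.mpr ⟨ht1, htF⟩, ?_⟩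
    show W - g * t = ∑ j ∈ x, w j
    rw [hgt]
    omega
  refine le_trans (Set.ncard_le_ncard hsubset ((Set.finite_Icc 1 F).image _)) ?_
  refine le_trans (Set.ncard_image_le (Set.finite_Icc 1 F)) ?_
  rw [← Finset.coe_Icc, Set.ncard_coe_finset, Nat.card_Icc]
  omega

/-- Let `a` be primitive, `S` an independence system,
`w ∈ {a₁,…,a_p}^n`, `λ_i := max(a)` for all `i`. For each `μ ≤ λ` with
`S^λ_μ ≠ ∅` let `x_μ` maximize `w·x` over `S^λ_μ` and `T_μ := {x : x ≤ x_μ}`.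
Then `|w·S \ ⋃_μ w·T_μ| ≤ r(a)`, and consequently any `x*` minimizing `f(w·x)`
over `(⋃_μ T_μ) ∩ S` is an `r(a)`-best solution to `min{f(w·x) : x ∈ S}`,
for any `f : ℤ → ℝ`. -/
theorem r_best_solution {n p : ℕ} (a : Fin p → ℕ)
    (ha_pos : ∀ i, 0 < a i) (ha_inj : Function.Injective a)
    (ha_gcd : Finset.univ.gcd a = 1)
    (S : Set (Finset (Fin n))) (hS_ne : S.Nonempty)
    (hS_indep : ∀ x y : Finset (Fin n), x ⊆ y → y ∈ S → x ∈ S)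
    (w : Fin n → ℕ) (hw : ∀ j, ∃ i, w j = a i)
    (lam : Fin p → ℕ) (hlam : lam = fun _ => Finset.univ.sup a)
    (xm : (Fin p → ℕ) → Finset (Fin n))
    (hxm : ∀ μ ≤ lam, (block a w S lam μ).Nonempty →
      xm μ ∈ block a w S lam μ ∧
        ∀ x ∈ block a w S lam μ, ∑ j ∈ x, w j ≤ ∑ j ∈ xm μ, w j)
    (U : Set (Finset (Fin n)))
    (hU : U = ⋃ μ ∈ {μ : Fin p → ℕ | μ ≤ lam ∧ (block a w S lam μ).Nonempty},
      {x : Finset (Fin n) | x ⊆ xm μ}) :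
    (((fun x : Finset (Fin n) => ∑ j ∈ x, w j) '' S) \
        ((fun x : Finset (Fin n) => ∑ j ∈ x, w j) '' U)).ncard ≤ rval a ∧
    ∀ f : ℤ → ℝ, ∀ xstar ∈ U ∩ S,
      (∀ y ∈ U ∩ S, f ((∑ j ∈ xstar, w j : ℕ) : ℤ) ≤ f ((∑ j ∈ y, w j : ℕ) : ℤ)) →
      {v : ℝ | ∃ x ∈ S, v = f ((∑ j ∈ x, w j : ℕ) : ℤ) ∧
        v < f ((∑ j ∈ xstar, w j : ℕ) : ℤ)}.ncard ≤ rval a := by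
  classical
  subst hlam
  have hSfin : S.Finite := Set.toFinite S
  have part1 : (((fun x : Finset (Fin n) => ∑ j ∈ x, w j) '' S) \
      ((fun x : Finset (Fin n) => ∑ j ∈ x, w j) '' U)).ncard ≤ rval a := by
    have hcover : (((fun x : Finset (Fin n) => ∑ j ∈ x, w j) '' S) \
        ((fun x : Finset (Fin n) => ∑ j ∈ x, w j) '' U)) ⊆
        ⋃ μh : Fin p → Fin (Finset.univ.sup a + 1),
          ((((fun x : Finset (Fin n) => ∑ j ∈ x, w j) '' S) \
            ((fun x : Finset (Fin n) => ∑ j ∈ x, w j) '' U)) ∩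
            {v | ∃ x ∈ block a w S (fun _ => Finset.univ.sup a) (fun i => ((μh i : ℕ))),
              v = ∑ j ∈ x, w j}) := by
      rintro v hv
      obtain ⟨x, hxS, rfl⟩ := hv.1
      refine Set.mem_iUnion.mpr
        ⟨fun i => ⟨min (lamCoord a w x i) (Finset.univ.sup a), by omega⟩, hv, x, ?_, rfl⟩
      refine ⟨hxS, fun i => ⟨?_, ?_⟩⟩
      · intro h
        simp only [Fin.val_mk] at h ⊢
        omega
      · intro h
        simp only [Fin.val_mk] at h ⊢
        omega
    refine le_trans (Set.ncard_le_ncard hcover ?_) (le_trans (ncard_iUnion_le' _) ?_)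
    · refine Set.Finite.subset (hSfin.image (fun x => ∑ j ∈ x, w j)) ?_
      intro v hv
      rw [Set.mem_iUnion] at hv
      obtain ⟨μh, hv⟩ := hv
      exact hv.1.1
    · exact le_trans (Finset.sum_le_sum fun μh _ =>
        bad_ncard_le a ha_pos ha_inj S w hw xm hxm U hU μh) (le_of_eq rfl)
  refine ⟨part1, ?_⟩
  intro f xstar hxstar hminf
  have hUS : U ⊆ S := by
    rw [hU]
    rintro y hy
    rw [Set.mem_iUnion₂] at hy
    obtain ⟨μ0, hμ0, hysub⟩ := hy
    exact hS_indep y (xm μ0) hysub (hxm μ0 hμ0.1 hμ0.2).1.1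
  have hsub : {v : ℝ | ∃ x ∈ S, v = f ((∑ j ∈ x, w j : ℕ) : ℤ) ∧
      v < f ((∑ j ∈ xstar, w j : ℕ) : ℤ)} ⊆
      (fun m : ℕ => f (m : ℤ)) '' (((fun x : Finset (Fin n) => ∑ j ∈ x, w j) '' S) \
        ((fun x : Finset (Fin n) => ∑ j ∈ x, w j) '' U)) := by
    rintro v ⟨x, hxS, rfl, hvlt⟩
    refine ⟨∑ j ∈ x, w j, ⟨⟨x, hxS, rfl⟩, ?_⟩, rfl⟩
    rintro ⟨y, hyU, hyeq⟩
    have hm := hminf y ⟨hyU, hUS hyU⟩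
    simp only [] at hyeq
    rw [hyeq] at hm
    exact absurd hvlt (not_lt.mpr hm)
  have hVfin : ((((fun x : Finset (Fin n) => ∑ j ∈ x, w j) '' S) \
      ((fun x : Finset (Fin n) => ∑ j ∈ x, w j) '' U))).Finite :=
    Set.Finite.subset (hSfin.image _) Set.diff_subset
  exact le_trans (Set.ncard_le_ncard hsub (hVfin.image _))
    (le_trans (Set.ncard_image_le hVfin) part1)
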